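/- Suppose the weighted undirected graph a on n nodes is connected, and let (X*, Y*, Z*, U*, W*, Λ¹*, Λ²*, Λ³*) be an equilibrium of algorithm (CCR-alg). Define, for X_i ∈ ℝ^{r×p}, Y_{vi} ∈ ℝ^{r_i×q}, U_i ∈ ℝ^{m×q} (i = 1,…,n), V₁(X, Y, U) = (1/2)Σ_{i=1}^n ‖A_{li}Y_{vi} − [F_{vi}]_R − U_i‖_F² + Σ_{i=1}^n Σ_{j=1}^n ⟨Λ¹_i*, a_{i,j}(X_i − X_j)⟩_F + Σ_{i=1}^n ⟨Λ²_i*, U_i⟩_F + Σ_{i=1}^n ⟨Λ³_i*, [Y_{vi}]_R − X_i[B_{li}]_C⟩_F − (1/2)Σ_{i=1}^n ‖A_{li}Y_{vi}* − [F_{vi}]_R − U_i*‖_F². Then V₁(X, Y, U) ≥ 0 for all X, Y, U. -/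
import Mathlib


open Matrix

/-- Squared Frobenius norm of a real matrix: `‖M‖_F² = tr (Mᵀ M)`. -/
noncomputable def frobSq {α β : Type*} [Fintype α] [Fintype β] (M : Matrix α β ℝ) : ℝ :=
  Matrix.trace (Mᵀ * M)

/-- Frobenius inner product of real matrices: `⟨M,N⟩_F = tr (Mᵀ N)`. -/
noncomputable def frobInner {α β : Type*} [Fintype α] [Fintype β] (M N : Matrix α β ℝ) : ℝ :=
  Matrix.trace (Mᵀ * N)

/-- The weighted undirected graph with adjacency matrix `a` is connected: any two nodes are
joined by a path of adjacent nodes (nodes `u ≠ v` are adjacent iff `a u v > 0`). -/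
def GraphConnected {n : ℕ} (a : Matrix (Fin n) (Fin n) ℝ) : Prop :=
  ∀ i j : Fin n, Relation.ReflTransGen (fun u v : Fin n => u ≠ v ∧ 0 < a u v) i j

/-- Assemble a family of row blocks `M i ∈ ℝ^{d i × β}` into one matrix. -/
def blockRows {n : ℕ} {d : Fin n → ℕ} {β : Type*} (M : ∀ i, Matrix (Fin (d i)) β ℝ) :
    Matrix ((i : Fin n) × Fin (d i)) β ℝ :=
  Matrix.of fun s j => M s.1 s.2 j

/-- Assemble a family of column blocks `M i ∈ ℝ^{α × d i}` into one matrix. -/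
def blockCols {n : ℕ} {d : Fin n → ℕ} {α : Type*} (M : ∀ i, Matrix α (Fin (d i)) ℝ) :
    Matrix α ((i : Fin n) × Fin (d i)) ℝ :=
  Matrix.of fun k s => M s.1 k s.2

/-- The `i`-th row block of a matrix whose rows are partitioned according to `d`. -/
def rowBlk {n : ℕ} {d : Fin n → ℕ} {β : Type*}
    (Y : Matrix ((i : Fin n) × Fin (d i)) β ℝ) (i : Fin n) :
    Matrix (Fin (d i)) β ℝ :=
  Matrix.of fun k j => Y ⟨i, k⟩ j

/-- `[M]_R`: the matrix whose `i`-th row block is `M` and whose other row blocks are zero. -/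
def embedRow {n : ℕ} {d : Fin n → ℕ} {β : Type*} (i : Fin n)
    (M : Matrix (Fin (d i)) β ℝ) :
    Matrix ((i' : Fin n) × Fin (d i')) β ℝ :=
  Matrix.of fun s j => if h : s.1 = i then M (Fin.cast (congrArg d h) s.2) j else 0

/-- `[M]_C`: the matrix whose `i`-th column block is `M` and whose other column blocks are zero. -/
def embedCol {n : ℕ} {d : Fin n → ℕ} {α : Type*} (i : Fin n)
    (M : Matrix α (Fin (d i)) ℝ) :
    Matrix α ((i' : Fin n) × Fin (d i')) ℝ :=
  Matrix.of fun k s => if h : s.1 = i then M k (Fin.cast (congrArg d h) s.2) else 0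

/-- Feasibility for problem (CCR-opt). -/
def CCRfeas {n p : ℕ} {rdim qdim mdim : Fin n → ℕ}
    (a : Matrix (Fin n) (Fin n) ℝ)
    (Bl : ∀ i, Matrix (Fin p) (Fin (qdim i)) ℝ)
    (X : Fin n → Matrix ((i : Fin n) × Fin (rdim i)) (Fin p) ℝ)
    (Yv : ∀ i, Matrix (Fin (rdim i)) ((i' : Fin n) × Fin (qdim i')) ℝ)
    (Z : Fin n → Matrix ((i : Fin n) × Fin (rdim i)) ((i' : Fin n) × Fin (qdim i')) ℝ)
    (U W : Fin n → Matrix ((i : Fin n) × Fin (mdim i)) ((i' : Fin n) × Fin (qdim i')) ℝ) :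
    Prop :=
  (∀ i j, X i = X j) ∧
  (∀ i, U i = ∑ j, a i j • (W i - W j)) ∧
  (∀ i, embedRow i (Yv i) - X i * embedCol i (Bl i) - ∑ j, a i j • (Z i - Z j) = 0)

/-- Objective of problem (CCR-opt): `Σ_i ‖A_{li} Y_{vi} − [F_{vi}]_R − U_i‖_F²`. -/
noncomputable def CCRobj {n : ℕ} {rdim qdim mdim : Fin n → ℕ}
    (Al : ∀ i, Matrix ((i' : Fin n) × Fin (mdim i')) (Fin (rdim i)) ℝ)
    (Fv : ∀ i, Matrix (Fin (mdim i)) ((i' : Fin n) × Fin (qdim i')) ℝ)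
    (Yv : ∀ i, Matrix (Fin (rdim i)) ((i' : Fin n) × Fin (qdim i')) ℝ)
    (U : Fin n → Matrix ((i : Fin n) × Fin (mdim i)) ((i' : Fin n) × Fin (qdim i')) ℝ) : ℝ :=
  ∑ i, frobSq (Al i * Yv i - embedRow i (Fv i) - U i)

/-- Right-hand side of the `X_i`-equation in algorithm (CCR-alg). -/
noncomputable def CCRrhsX {n p : ℕ} {rdim qdim : Fin n → ℕ}
    (a : Matrix (Fin n) (Fin n) ℝ)
    (Bl : ∀ i, Matrix (Fin p) (Fin (qdim i)) ℝ)
    (X L1 : Fin n → Matrix ((i : Fin n) × Fin (rdim i)) (Fin p) ℝ)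
    (L3 : Fin n → Matrix ((i : Fin n) × Fin (rdim i)) ((i' : Fin n) × Fin (qdim i')) ℝ)
    (i : Fin n) : Matrix ((i : Fin n) × Fin (rdim i)) (Fin p) ℝ :=
  L3 i * (embedCol i (Bl i))ᵀ - ∑ j, a i j • (L1 i - L1 j) - ∑ j, a i j • (X i - X j)

/-- Right-hand side of the `Y_{vi}`-equation in algorithm (CCR-alg). -/
noncomputable def CCRrhsY {n : ℕ} {rdim qdim mdim : Fin n → ℕ}
    (Al : ∀ i, Matrix ((i' : Fin n) × Fin (mdim i')) (Fin (rdim i)) ℝ)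
    (Fv : ∀ i, Matrix (Fin (mdim i)) ((i' : Fin n) × Fin (qdim i')) ℝ)
    (Yv : ∀ i, Matrix (Fin (rdim i)) ((i' : Fin n) × Fin (qdim i')) ℝ)
    (U : Fin n → Matrix ((i : Fin n) × Fin (mdim i)) ((i' : Fin n) × Fin (qdim i')) ℝ)
    (L3 : Fin n → Matrix ((i : Fin n) × Fin (rdim i)) ((i' : Fin n) × Fin (qdim i')) ℝ)
    (i : Fin n) : Matrix (Fin (rdim i)) ((i' : Fin n) × Fin (qdim i')) ℝ :=
  -((Al i)ᵀ * (Al i * Yv i - embedRow i (Fv i) - U i)) - rowBlk (L3 i) i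

/-- Right-hand side of the `U_i`-equation in algorithm (CCR-alg). -/
noncomputable def CCRrhsU {n : ℕ} {rdim qdim mdim : Fin n → ℕ}
    (Al : ∀ i, Matrix ((i' : Fin n) × Fin (mdim i')) (Fin (rdim i)) ℝ)
    (Fv : ∀ i, Matrix (Fin (mdim i)) ((i' : Fin n) × Fin (qdim i')) ℝ)
    (Yv : ∀ i, Matrix (Fin (rdim i)) ((i' : Fin n) × Fin (qdim i')) ℝ)
    (U L2 : Fin n → Matrix ((i : Fin n) × Fin (mdim i)) ((i' : Fin n) × Fin (qdim i')) ℝ)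
    (i : Fin n) : Matrix ((i : Fin n) × Fin (mdim i)) ((i' : Fin n) × Fin (qdim i')) ℝ :=
  Al i * Yv i - embedRow i (Fv i) - U i - L2 i

/-- Right-hand side of the `W_i`-equation in algorithm (CCR-alg). -/
noncomputable def CCRrhsW {n : ℕ} {qdim mdim : Fin n → ℕ}
    (a : Matrix (Fin n) (Fin n) ℝ)
    (L2 : Fin n → Matrix ((i : Fin n) × Fin (mdim i)) ((i' : Fin n) × Fin (qdim i')) ℝ)
    (i : Fin n) : Matrix ((i : Fin n) × Fin (mdim i)) ((i' : Fin n) × Fin (qdim i')) ℝ :=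
  ∑ j, a i j • (L2 i - L2 j)

/-- Right-hand side of the `Z_i`-equation in algorithm (CCR-alg). -/
noncomputable def CCRrhsZ {n : ℕ} {rdim qdim : Fin n → ℕ}
    (a : Matrix (Fin n) (Fin n) ℝ)
    (L3 : Fin n → Matrix ((i : Fin n) × Fin (rdim i)) ((i' : Fin n) × Fin (qdim i')) ℝ)
    (i : Fin n) : Matrix ((i : Fin n) × Fin (rdim i)) ((i' : Fin n) × Fin (qdim i')) ℝ :=
  ∑ j, a i j • (L3 i - L3 j)

/-- Right-hand side of the `Λ¹_i`-equation in algorithm (CCR-alg). -/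
noncomputable def CCRrhsL1 {n p : ℕ} {rdim : Fin n → ℕ}
    (a : Matrix (Fin n) (Fin n) ℝ)
    (X : Fin n → Matrix ((i : Fin n) × Fin (rdim i)) (Fin p) ℝ)
    (i : Fin n) : Matrix ((i : Fin n) × Fin (rdim i)) (Fin p) ℝ :=
  ∑ j, a i j • (X i - X j)

/-- Right-hand side of the `Λ²_i`-equation in algorithm (CCR-alg), with the derivative
feedback replaced by the right-hand side that determines it. -/
noncomputable def CCRrhsL2 {n : ℕ} {rdim qdim mdim : Fin n → ℕ}
    (a : Matrix (Fin n) (Fin n) ℝ)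
    (Al : ∀ i, Matrix ((i' : Fin n) × Fin (mdim i')) (Fin (rdim i)) ℝ)
    (Fv : ∀ i, Matrix (Fin (mdim i)) ((i' : Fin n) × Fin (qdim i')) ℝ)
    (Yv : ∀ i, Matrix (Fin (rdim i)) ((i' : Fin n) × Fin (qdim i')) ℝ)
    (U W L2 : Fin n → Matrix ((i : Fin n) × Fin (mdim i)) ((i' : Fin n) × Fin (qdim i')) ℝ)
    (i : Fin n) : Matrix ((i : Fin n) × Fin (mdim i)) ((i' : Fin n) × Fin (qdim i')) ℝ :=
  U i + CCRrhsU Al Fv Yv U L2 i - ∑ j, a i j • (W i - W j) - ∑ j, a i j • (L2 i - L2 j)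

/-- Right-hand side of the `Λ³_i`-equation in algorithm (CCR-alg), with the derivative
feedback replaced by the right-hand side that determines it. -/
noncomputable def CCRrhsL3 {n p : ℕ} {rdim qdim mdim : Fin n → ℕ}
    (a : Matrix (Fin n) (Fin n) ℝ)
    (Al : ∀ i, Matrix ((i' : Fin n) × Fin (mdim i')) (Fin (rdim i)) ℝ)
    (Bl : ∀ i, Matrix (Fin p) (Fin (qdim i)) ℝ)
    (Fv : ∀ i, Matrix (Fin (mdim i)) ((i' : Fin n) × Fin (qdim i')) ℝ)
    (X : Fin n → Matrix ((i : Fin n) × Fin (rdim i)) (Fin p) ℝ)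
    (Yv : ∀ i, Matrix (Fin (rdim i)) ((i' : Fin n) × Fin (qdim i')) ℝ)
    (Z : Fin n → Matrix ((i : Fin n) × Fin (rdim i)) ((i' : Fin n) × Fin (qdim i')) ℝ)
    (U L2 : Fin n → Matrix ((i : Fin n) × Fin (mdim i)) ((i' : Fin n) × Fin (qdim i')) ℝ)
    (L3 : Fin n → Matrix ((i : Fin n) × Fin (rdim i)) ((i' : Fin n) × Fin (qdim i')) ℝ)
    (i : Fin n) : Matrix ((i : Fin n) × Fin (rdim i)) ((i' : Fin n) × Fin (qdim i')) ℝ :=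
  embedRow i (Yv i) + embedRow i (CCRrhsY Al Fv Yv U L3 i)
    - X i * embedCol i (Bl i) - ∑ j, a i j • (Z i - Z j) - ∑ j, a i j • (L3 i - L3 j)

/-- Equilibrium of algorithm (CCR-alg): all right-hand sides vanish. -/
noncomputable def CCRequil {n p : ℕ} {rdim qdim mdim : Fin n → ℕ}
    (a : Matrix (Fin n) (Fin n) ℝ)
    (Al : ∀ i, Matrix ((i' : Fin n) × Fin (mdim i')) (Fin (rdim i)) ℝ)
    (Bl : ∀ i, Matrix (Fin p) (Fin (qdim i)) ℝ)
    (Fv : ∀ i, Matrix (Fin (mdim i)) ((i' : Fin n) × Fin (qdim i')) ℝ)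
    (X : Fin n → Matrix ((i : Fin n) × Fin (rdim i)) (Fin p) ℝ)
    (Yv : ∀ i, Matrix (Fin (rdim i)) ((i' : Fin n) × Fin (qdim i')) ℝ)
    (Z : Fin n → Matrix ((i : Fin n) × Fin (rdim i)) ((i' : Fin n) × Fin (qdim i')) ℝ)
    (U W : Fin n → Matrix ((i : Fin n) × Fin (mdim i)) ((i' : Fin n) × Fin (qdim i')) ℝ)
    (L1 : Fin n → Matrix ((i : Fin n) × Fin (rdim i)) (Fin p) ℝ)
    (L2 : Fin n → Matrix ((i : Fin n) × Fin (mdim i)) ((i' : Fin n) × Fin (qdim i')) ℝ)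
    (L3 : Fin n → Matrix ((i : Fin n) × Fin (rdim i)) ((i' : Fin n) × Fin (qdim i')) ℝ) :
    Prop :=
  ∀ i, CCRrhsX a Bl X L1 L3 i = 0 ∧ CCRrhsY Al Fv Yv U L3 i = 0 ∧
    CCRrhsU Al Fv Yv U L2 i = 0 ∧ CCRrhsW a L2 i = 0 ∧ CCRrhsZ a L3 i = 0 ∧
    CCRrhsL1 a X i = 0 ∧ CCRrhsL2 a Al Fv Yv U W L2 i = 0 ∧
    CCRrhsL3 a Al Bl Fv X Yv Z U L2 L3 i = 0

section helpers
variable {α β : Type*} [Fintype α] [Fintype β]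

lemma frobInner_eq (M N : Matrix α β ℝ) : frobInner M N = ∑ j, ∑ k, M k j * N k j := by
  simp [frobInner, Matrix.trace, Matrix.mul_apply, Matrix.diag, Matrix.transpose_apply]

lemma frobSq_eq_inner (M : Matrix α β ℝ) : frobSq M = frobInner M M := rfl

lemma frobSq_nonneg (M : Matrix α β ℝ) : 0 ≤ frobSq M := by
  rw [frobSq_eq_inner, frobInner_eq]
  exact Finset.sum_nonneg fun j _ => Finset.sum_nonneg fun k _ => mul_self_nonneg _

lemma frobInner_comm (M N : Matrix α β ℝ) : frobInner M N = frobInner N M := by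
  rw [frobInner, ← Matrix.trace_transpose, Matrix.transpose_mul, Matrix.transpose_transpose]; rfl

lemma frobInner_sub_right (M N₁ N₂ : Matrix α β ℝ) :
    frobInner M (N₁ - N₂) = frobInner M N₁ - frobInner M N₂ := by
  simp [frobInner, Matrix.mul_sub]

lemma frobInner_add_right (M N₁ N₂ : Matrix α β ℝ) :
    frobInner M (N₁ + N₂) = frobInner M N₁ + frobInner M N₂ := by
  simp [frobInner, Matrix.mul_add]

lemma frobInner_smul_right (c : ℝ) (M N : Matrix α β ℝ) :
    frobInner M (c • N) = c * frobInner M N := by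
  simp [frobInner, Matrix.mul_smul]

lemma frobInner_zero_right (M : Matrix α β ℝ) : frobInner M 0 = 0 := by
  simp [frobInner]

lemma frobInner_neg_left (M N : Matrix α β ℝ) : frobInner (-M) N = -frobInner M N := by
  simp [frobInner]

lemma frobInner_sum_right {ι : Type*} [Fintype ι] (M : Matrix α β ℝ) (f : ι → Matrix α β ℝ) :
    frobInner M (∑ j, f j) = ∑ j, frobInner M (f j) := by
  simp [frobInner, Matrix.mul_sum]

lemma frobInner_sum_left {ι : Type*} [Fintype ι] (f : ι → Matrix α β ℝ) (N : Matrix α β ℝ) :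
    frobInner (∑ j, f j) N = ∑ j, frobInner (f j) N := by
  simp only [frobInner_comm _ N]; exact frobInner_sum_right N f

lemma frobInner_smul_left (c : ℝ) (M N : Matrix α β ℝ) :
    frobInner (c • M) N = c * frobInner M N := by
  rw [frobInner_comm, frobInner_smul_right, frobInner_comm]

lemma frobInner_sub_left (M₁ M₂ N : Matrix α β ℝ) :
    frobInner (M₁ - M₂) N = frobInner M₁ N - frobInner M₂ N := by
  rw [frobInner_comm, frobInner_sub_right, frobInner_comm M₁, frobInner_comm M₂]

lemma frobInner_zero_left (N : Matrix α β ℝ) : frobInner 0 N = 0 := by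
  rw [frobInner_comm]; exact frobInner_zero_right N

lemma frobSq_expand (M N : Matrix α β ℝ) :
    frobSq M = frobSq N + 2 * frobInner N (M - N) + frobSq (M - N) := by
  simp only [frobSq_eq_inner, frobInner_sub_right]
  have h1 : frobInner (M - N) M = frobInner M M - frobInner N M := frobInner_sub_left _ _ _
  have h2 : frobInner (M - N) N = frobInner M N - frobInner N N := frobInner_sub_left _ _ _
  have h3 : frobInner M N = frobInner N M := frobInner_comm _ _
  linarith

lemma frobInner_mul_left {γ : Type*} [Fintype γ] (P : Matrix α β ℝ) (M : Matrix α γ ℝ)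
    (N : Matrix γ β ℝ) : frobInner P (M * N) = frobInner (Mᵀ * P) N := by
  simp [frobInner, Matrix.transpose_mul, Matrix.mul_assoc]

lemma frobInner_mul_right {γ : Type*} [Fintype γ] (P : Matrix α β ℝ) (M : Matrix α γ ℝ)
    (B : Matrix γ β ℝ) : frobInner P (M * B) = frobInner (P * Bᵀ) M := by
  rw [frobInner, frobInner, Matrix.transpose_mul, Matrix.transpose_transpose,
    ← Matrix.mul_assoc, Matrix.trace_mul_comm, Matrix.mul_assoc]

lemma frobInner_embedRow {n : ℕ} {d : Fin n → ℕ} (i : Fin n)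
    (L : Matrix ((i' : Fin n) × Fin (d i')) β ℝ) (M : Matrix (Fin (d i)) β ℝ) :
    frobInner L (embedRow i M) = frobInner (rowBlk L i) M := by
  simp only [frobInner_eq, embedRow, rowBlk, Matrix.of_apply]
  refine Finset.sum_congr rfl fun j _ => ?_
  rw [← Finset.univ_sigma_univ, Finset.sum_sigma]
  rw [Finset.sum_eq_single i]
  · simp
  · intro i' _ hi'
    refine Finset.sum_eq_zero fun k _ => ?_
    rw [dif_neg hi', mul_zero]
  · intro h; exact absurd (Finset.mem_univ i) h

omit [Fintype β] in
lemma embedRow_zero {n : ℕ} {d : Fin n → ℕ} (i : Fin n) :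
    embedRow (β := β) (d := d) i 0 = 0 := by
  ext s j; simp [embedRow]

lemma swap_lemma {n : ℕ} (a : Matrix (Fin n) (Fin n) ℝ) (hsym : ∀ i j, a i j = a j i)
    (P Q : Fin n → Matrix α β ℝ) :
    ∑ i, frobInner (P i) (∑ j, a i j • (Q i - Q j)) =
      ∑ i, frobInner (∑ j, a i j • (P i - P j)) (Q i) := by
  simp only [frobInner_sum_right, frobInner_sum_left, frobInner_smul_right,
    frobInner_smul_left, frobInner_sub_right, frobInner_sub_left, mul_sub,
    Finset.sum_sub_distrib]
  have : ∑ i, ∑ j, a i j * frobInner (P i) (Q j)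
      = ∑ i, ∑ j, a i j * frobInner (P j) (Q i) := by
    rw [Finset.sum_comm]
    refine Finset.sum_congr rfl fun i _ => Finset.sum_congr rfl fun j _ => ?_
    rw [hsym]
  linarith [this]
end helpers


theorem stmt_13 (n p : ℕ) (hn : 0 < n) (rdim qdim mdim : Fin n → ℕ)
    (a : Matrix (Fin n) (Fin n) ℝ)
    (hsym : ∀ i j, a i j = a j i) (hnonneg : ∀ i j, 0 ≤ a i j)
    (hdiag : ∀ i, a i i = 0) (hconn : GraphConnected a)
    (Al : ∀ i, Matrix ((i' : Fin n) × Fin (mdim i')) (Fin (rdim i)) ℝ)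
    (Bl : ∀ i, Matrix (Fin p) (Fin (qdim i)) ℝ)
    (Fv : ∀ i, Matrix (Fin (mdim i)) ((i' : Fin n) × Fin (qdim i')) ℝ)
    (Xs : Fin n → Matrix ((i : Fin n) × Fin (rdim i)) (Fin p) ℝ)
    (Ys : ∀ i, Matrix (Fin (rdim i)) ((i' : Fin n) × Fin (qdim i')) ℝ)
    (Zs : Fin n → Matrix ((i : Fin n) × Fin (rdim i)) ((i' : Fin n) × Fin (qdim i')) ℝ)
    (Us Ws : Fin n → Matrix ((i : Fin n) × Fin (mdim i)) ((i' : Fin n) × Fin (qdim i')) ℝ)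
    (L1s : Fin n → Matrix ((i : Fin n) × Fin (rdim i)) (Fin p) ℝ)
    (L2s : Fin n → Matrix ((i : Fin n) × Fin (mdim i)) ((i' : Fin n) × Fin (qdim i')) ℝ)
    (L3s : Fin n → Matrix ((i : Fin n) × Fin (rdim i)) ((i' : Fin n) × Fin (qdim i')) ℝ)
    (hequil : CCRequil a Al Bl Fv Xs Ys Zs Us Ws L1s L2s L3s)
    (X : Fin n → Matrix ((i : Fin n) × Fin (rdim i)) (Fin p) ℝ)
    (Yv : ∀ i, Matrix (Fin (rdim i)) ((i' : Fin n) × Fin (qdim i')) ℝ)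
    (U : Fin n → Matrix ((i : Fin n) × Fin (mdim i)) ((i' : Fin n) × Fin (qdim i')) ℝ) :
    0 ≤ (1 / 2) * (∑ i, frobSq (Al i * Yv i - embedRow i (Fv i) - U i))
        + (∑ i, ∑ j, frobInner (L1s i) (a i j • (X i - X j)))
        + (∑ i, frobInner (L2s i) (U i))
        + (∑ i, frobInner (L3s i) (embedRow i (Yv i) - X i * embedCol i (Bl i)))
        - (1 / 2) * (∑ i, frobSq (Al i * Ys i - embedRow i (Fv i) - Us i)) := by
  classical
  -- equilibrium facts
  have hU : ∀ i, Al i * Ys i - embedRow i (Fv i) - Us i = L2s i := by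
    intro i
    have h := (hequil i).2.2.1
    simp only [CCRrhsU] at h
    exact sub_eq_zero.mp h
  have hYs : ∀ i, (Al i)ᵀ * (Al i * Ys i - embedRow i (Fv i) - Us i) = -(rowBlk (L3s i) i) := by
    intro i
    have h := (hequil i).2.1
    simp only [CCRrhsY] at h
    have h2 := sub_eq_zero.mp h
    exact neg_eq_iff_eq_neg.mp h2
  have hL1 : ∀ i, ∑ j, a i j • (Xs i - Xs j) = 0 := by
    intro i
    have h := (hequil i).2.2.2.2.2.1
    simpa only [CCRrhsL1] using h
  have hW0 : ∀ i, ∑ j, a i j • (L2s i - L2s j) = 0 := by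
    intro i
    have h := (hequil i).2.2.2.1
    simpa only [CCRrhsW] using h
  have hZ0 : ∀ i, ∑ j, a i j • (L3s i - L3s j) = 0 := by
    intro i
    have h := (hequil i).2.2.2.2.1
    simpa only [CCRrhsZ] using h
  have hXeq : ∀ i, L3s i * (embedCol i (Bl i))ᵀ = ∑ j, a i j • (L1s i - L1s j) := by
    intro i
    have h := (hequil i).1
    simp only [CCRrhsX] at h
    rw [hL1 i, sub_zero] at h
    exact sub_eq_zero.mp h
  have hUs : ∀ i, Us i = ∑ j, a i j • (Ws i - Ws j) := by
    intro i
    have h := (hequil i).2.2.2.2.2.2.1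
    simp only [CCRrhsL2] at h
    rw [(hequil i).2.2.1, hW0 i, add_zero, sub_zero] at h
    exact sub_eq_zero.mp h
  have hFeas3 : ∀ i, embedRow i (Ys i) - Xs i * embedCol i (Bl i)
      = ∑ j, a i j • (Zs i - Zs j) := by
    intro i
    have h := (hequil i).2.2.2.2.2.2.2
    simp only [CCRrhsL3] at h
    rw [(hequil i).2.1, embedRow_zero, add_zero, hZ0 i, sub_zero] at h
    exact sub_eq_zero.mp h
  -- key per-X identity
  have ZA : ∀ X' : Fin n → Matrix ((i : Fin n) × Fin (rdim i)) (Fin p) ℝ,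
      ∑ i, frobInner (L3s i) (X' i * embedCol i (Bl i))
        = ∑ i, frobInner (L1s i) (∑ j, a i j • (X' i - X' j)) := by
    intro X'
    have h1 : ∀ i, frobInner (L3s i) (X' i * embedCol i (Bl i))
        = frobInner (∑ j, a i j • (L1s i - L1s j)) (X' i) := by
      intro i
      rw [frobInner_mul_right, hXeq i]
    rw [Finset.sum_congr rfl fun i _ => h1 i, ← swap_lemma a hsym L1s X']
  have ZB : ∑ i, frobInner (L2s i) (Us i) = 0 := by
    have h1 : ∀ i, frobInner (L2s i) (Us i)
        = frobInner (L2s i) (∑ j, a i j • (Ws i - Ws j)) := fun i => by rw [← hUs i]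
    rw [Finset.sum_congr rfl fun i _ => h1 i, swap_lemma a hsym]
    exact Finset.sum_eq_zero fun i _ => by rw [hW0 i, frobInner_zero_left]
  have ZC : ∑ i, frobInner (L3s i) (∑ j, a i j • (Zs i - Zs j)) = 0 := by
    rw [swap_lemma a hsym]
    exact Finset.sum_eq_zero fun i _ => by rw [hZ0 i, frobInner_zero_left]
  have ZD : ∑ i, frobInner (L1s i) (∑ j, a i j • (Xs i - Xs j)) = 0 :=
    Finset.sum_eq_zero fun i _ => by rw [hL1 i, frobInner_zero_right]
  -- per-i computation of the cross term
  have hdiff : ∀ i, (Al i * Yv i - embedRow i (Fv i) - U i)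
      - (Al i * Ys i - embedRow i (Fv i) - Us i)
      = Al i * (Yv i - Ys i) - (U i - Us i) := by
    intro i; rw [Matrix.mul_sub]; abel
  have hterm : ∀ i, frobInner (Al i * Ys i - embedRow i (Fv i) - Us i)
      ((Al i * Yv i - embedRow i (Fv i) - U i) - (Al i * Ys i - embedRow i (Fv i) - Us i))
      = (frobInner (L3s i) (embedRow i (Ys i)) - frobInner (L3s i) (embedRow i (Yv i)))
        - frobInner (L2s i) (U i) + frobInner (L2s i) (Us i) := by
    intro i
    rw [hdiff i, frobInner_sub_right, frobInner_mul_left, hYs i, frobInner_neg_left, hU i,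
      frobInner_sub_right, frobInner_sub_right, ← frobInner_embedRow, ← frobInner_embedRow]
    ring
  -- the zero bracket
  have e1 : ∑ i, frobInner (Al i * Ys i - embedRow i (Fv i) - Us i)
      ((Al i * Yv i - embedRow i (Fv i) - U i) - (Al i * Ys i - embedRow i (Fv i) - Us i))
      = ∑ i, ((frobInner (L3s i) (embedRow i (Ys i)) - frobInner (L3s i) (embedRow i (Yv i)))
        - frobInner (L2s i) (U i) + frobInner (L2s i) (Us i)) :=
    Finset.sum_congr rfl fun i _ => hterm i
  have e2 : ∑ i, frobInner (L3s i) (embedRow i (Yv i) - X i * embedCol i (Bl i))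
      = ∑ i, (frobInner (L3s i) (embedRow i (Yv i))
        - frobInner (L3s i) (X i * embedCol i (Bl i))) :=
    Finset.sum_congr rfl fun i _ => frobInner_sub_right _ _ _
  have e3 : ∑ i, frobInner (L3s i) (X i * embedCol i (Bl i))
      = ∑ i, ∑ j, frobInner (L1s i) (a i j • (X i - X j)) :=
    (ZA X).trans (Finset.sum_congr rfl fun i _ => frobInner_sum_right _ _)
  have e4 : ∑ i, frobInner (L3s i) (embedRow i (Ys i)) = 0 := by
    have h1 : ∀ i, frobInner (L3s i) (embedRow i (Ys i))
        = frobInner (L3s i) (Xs i * embedCol i (Bl i))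
          + frobInner (L3s i) (∑ j, a i j • (Zs i - Zs j)) := by
      intro i
      rw [← frobInner_add_right]
      congr 1
      rw [← hFeas3 i]; abel
    rw [Finset.sum_congr rfl fun i _ => h1 i, Finset.sum_add_distrib, ZA Xs, ZD, ZC, add_zero]
  have hkey : (∑ i, frobInner (Al i * Ys i - embedRow i (Fv i) - Us i)
      ((Al i * Yv i - embedRow i (Fv i) - U i) - (Al i * Ys i - embedRow i (Fv i) - Us i)))
      + (∑ i, ∑ j, frobInner (L1s i) (a i j • (X i - X j)))
      + (∑ i, frobInner (L2s i) (U i))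
      + (∑ i, frobInner (L3s i) (embedRow i (Yv i) - X i * embedCol i (Bl i))) = 0 := by
    rw [e1, e2]
    simp only [Finset.sum_add_distrib, Finset.sum_sub_distrib]
    linarith [e3, e4, ZB]
  -- expansion and conclusion
  have hexp : ∑ i, frobSq (Al i * Yv i - embedRow i (Fv i) - U i)
      = (∑ i, frobSq (Al i * Ys i - embedRow i (Fv i) - Us i))
        + 2 * (∑ i, frobInner (Al i * Ys i - embedRow i (Fv i) - Us i)
          ((Al i * Yv i - embedRow i (Fv i) - U i) - (Al i * Ys i - embedRow i (Fv i) - Us i)))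
        + ∑ i, frobSq ((Al i * Yv i - embedRow i (Fv i) - U i)
          - (Al i * Ys i - embedRow i (Fv i) - Us i)) := by
    rw [Finset.sum_congr rfl fun i _ =>
      frobSq_expand (Al i * Yv i - embedRow i (Fv i) - U i)
        (Al i * Ys i - embedRow i (Fv i) - Us i)]
    rw [Finset.sum_add_distrib, Finset.sum_add_distrib, Finset.mul_sum]
  have hnn : 0 ≤ ∑ i, frobSq ((Al i * Yv i - embedRow i (Fv i) - U i)
      - (Al i * Ys i - embedRow i (Fv i) - Us i)) :=
    Finset.sum_nonneg fun i _ => frobSq_nonneg _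
  linarith [hkey, hexp, hnn]
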